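/- Let H be an n×n complex Hermitian matrix, let λ be an eigenvalue of H of algebraic multiplicity s ≥ 1, and let D = D_s(λ·1 − H) be the reduced order-one complement of order s of the characteristic matrix, i.e. the matrix whose (i,j) entry is the coefficient of z^(n−s) in the (i,j) entry of adjugate(1 + z·(λ·1 − H)) over ℂ[z]. Then D ≠ 0 and H * D = λ • D; in particular every nonzero column of D is an eigenvector of H associated with λ. -/

import Mathlib

/-- The reduced order-one complement of order `s` of an `n×n` matrix `A`:
the matrix whose `(i,j)` entry is the coefficient of `z^(n-s)` in the `(i,j)` entry
of `adjugate (1 + z • A)`, computed over the polynomial ring `R[z]`. -/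
noncomputable def redComp {R : Type*} [CommRing R] {n : ℕ} (s : ℕ)
    (A : Matrix (Fin n) (Fin n) R) : Matrix (Fin n) (Fin n) R :=
  Matrix.of fun i j =>
    (((1 + (Polynomial.X : Polynomial R) • A.map (fun a => Polynomial.C a) :
        Matrix (Fin n) (Fin n) (Polynomial R)).adjugate) i j).coeff (n - s)

open Polynomial Matrix


lemma adjugate_conj_aux {R : Type*} [CommRing R] {m : Type*} [Fintype m] [DecidableEq m]
    (P Q B : Matrix m m R) (h1 : P * Q = 1) (h2 : Q * P = 1) :
    (P * B * Q).adjugate = P * B.adjugate * Q := by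
  have hdet : P.det * Q.det = 1 := by rw [← det_mul, h1, det_one]
  have hadjQ : Q.adjugate = Q.det • P := by
    have := congrArg (P * ·) (Matrix.mul_adjugate Q)
    simpa [← mul_assoc, h1, Matrix.mul_smul] using this
  have hadjP : P.adjugate = P.det • Q := by
    have := congrArg (Q * ·) (Matrix.mul_adjugate P)
    simpa [← mul_assoc, h2, Matrix.mul_smul] using this
  rw [Matrix.adjugate_mul_distrib, Matrix.adjugate_mul_distrib, hadjQ, hadjP]
  simp [Matrix.mul_smul, Matrix.smul_mul, smul_smul, mul_comm Q.det P.det, hdet,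
    Matrix.mul_assoc]

lemma charpoly_conj_aux {n : ℕ} (V W : Matrix (Fin n) (Fin n) ℂ) (d : Fin n → ℂ)
    (h1 : V * W = 1) :
    (V * Matrix.diagonal d * W).charpoly = ∏ i, (X - C (d i)) := by
  have hX : (Matrix.diagonal fun _ : Fin n => (X : ℂ[X]))
      = (X : ℂ[X]) • (1 : Matrix (Fin n) (Fin n) ℂ[X]) := by
    ext i j
    rcases eq_or_ne i j with rfl | h
    · simp
    · simp [Matrix.diagonal_apply_ne _ h, Matrix.one_apply_ne h]
  have hcm : charmatrix (V * Matrix.diagonal d * W)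
      = V.map C * charmatrix (Matrix.diagonal d) * W.map C := by
    simp only [charmatrix, RingHom.mapMatrix_apply]
    rw [Matrix.mul_sub, Matrix.sub_mul]
    congr 1
    · rw [Matrix.scalar_apply, hX, Matrix.mul_smul, Matrix.smul_mul,
        show (V.map (C : ℂ →+* ℂ[X])) * 1 * (W.map (C : ℂ →+* ℂ[X])) = (V * W).map C by
          simp [Matrix.map_mul (f := (C : ℂ →+* ℂ[X]))], h1]
      simp
    · simp [Matrix.map_mul (f := (C : ℂ →+* ℂ[X])), Matrix.mul_assoc]
  have hcd : charmatrix (Matrix.diagonal d) = Matrix.diagonal (fun i => X - C (d i)) := by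
    ext i j
    by_cases h : i = j
    · subst h; simp [charmatrix_apply_eq]
    · simp [charmatrix_apply_ne _ _ _ h, Matrix.diagonal_apply_ne _ h]
  have hdet : (V.map (C : ℂ →+* ℂ[X])).det * (W.map (C : ℂ →+* ℂ[X])).det = 1 := by
    rw [← det_mul, ← Matrix.map_mul (f := (C : ℂ →+* ℂ[X])), h1]
    simp
  rw [Matrix.charpoly, hcm, hcd, det_mul, det_mul, det_diagonal,
    mul_comm _ ((W.map (C : ℂ →+* ℂ[X])).det), ← mul_assoc,
    mul_comm ((W.map (C : ℂ →+* ℂ[X])).det), hdet, one_mul]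

section Main

variable {n : ℕ} (V W : Matrix (Fin n) (Fin n) ℂ)

/-- entries of conjugated diagonal -/
lemma conj_diag_entry (q : Fin n → ℂ[X]) (i j : Fin n) :
    (V.map (fun a => (C a : ℂ[X])) * Matrix.diagonal q * W.map (fun a => (C a : ℂ[X]))) i j
      = ∑ k, C (V i k) * q k * C (W k j) := by
  rw [Matrix.mul_apply]
  refine Finset.sum_congr rfl fun k _ => ?_
  rw [Matrix.mul_diagonal]
  simp [Matrix.map_apply]

lemma redComp_conj (h1 : V * W = 1) (h2 : W * V = 1) (s : ℕ) (μ : Fin n → ℂ) :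
    redComp s (V * Matrix.diagonal μ * W)
      = V * Matrix.diagonal
          (fun k => ((∏ j ∈ Finset.univ.erase k, (1 + X * C (μ j))).coeff (n - s))) * W := by
  set VC := V.map (fun a => (C a : ℂ[X])) with hVC
  set WC := W.map (fun a => (C a : ℂ[X])) with hWC
  have hmap : ∀ (M N : Matrix (Fin n) (Fin n) ℂ),
      (M * N).map (fun a => (C a : ℂ[X])) =
        M.map (fun a => (C a : ℂ[X])) * N.map (fun a => (C a : ℂ[X])) :=
    fun M N => Matrix.map_mul (f := (C : ℂ →+* ℂ[X]))
  have h1C : VC * WC = 1 := by rw [hVC, hWC, ← hmap, h1]; simp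
  have h2C : WC * VC = 1 := by rw [hVC, hWC, ← hmap, h2]; simp
  set g : Fin n → ℂ[X] := fun j => 1 + X * C (μ j) with hg
  have hB : (1 : Matrix (Fin n) (Fin n) ℂ[X])
        + (X : ℂ[X]) • (V * Matrix.diagonal μ * W).map (fun a => (C a : ℂ[X]))
      = VC * Matrix.diagonal g * WC := by
    have hmapA : (V * Matrix.diagonal μ * W).map (fun a => (C a : ℂ[X]))
        = VC * Matrix.diagonal (fun i => (C (μ i) : ℂ[X])) * WC := by
      rw [hmap, hmap]
      congr 1
      congr 1
      exact Matrix.diagonal_map (by simp)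
    have hdg : Matrix.diagonal g
        = 1 + (X : ℂ[X]) • Matrix.diagonal (fun i => (C (μ i) : ℂ[X])) := by
      ext i j
      rcases eq_or_ne i j with rfl | h
      · simp [hg]
      · simp [Matrix.diagonal_apply_ne _ h, Matrix.one_apply_ne h]
    rw [hmapA, hdg, Matrix.mul_add, Matrix.add_mul, Matrix.mul_one, h1C]
    congr 1
    rw [Matrix.mul_smul, Matrix.smul_mul]
  ext i j
  show ((1 + (X : ℂ[X]) • (V * Matrix.diagonal μ * W).map (fun a => (C a : ℂ[X]))).adjugate i j).coeff
      (n - s) = _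
  have hRHS : ∀ (e : Fin n → ℂ), (V * Matrix.diagonal e * W) i j = ∑ k, V i k * e k * W k j := by
    intro e
    rw [Matrix.mul_apply]
    refine Finset.sum_congr rfl fun k _ => ?_
    rw [Matrix.mul_diagonal]
  rw [hB, adjugate_conj_aux _ _ _ h1C h2C, Matrix.adjugate_diagonal, conj_diag_entry,
    Polynomial.finset_sum_coeff, hRHS]
  refine Finset.sum_congr rfl fun k _ => ?_
  rw [Polynomial.coeff_mul_C, Polynomial.coeff_C_mul]

end Main


lemma natDegree_g_le (a : ℂ) : ((1 : ℂ[X]) + X * C a).natDegree ≤ 1 := by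
  refine (Polynomial.natDegree_add_le _ _).trans (max_le (by simp) ?_)
  exact (Polynomial.natDegree_mul_le).trans (by simp)

lemma coeff_g_one (a : ℂ) : ((1 : ℂ[X]) + X * C a).coeff 1 = a := by
  simp [Polynomial.coeff_one]

lemma coeff_q {n : ℕ} (μ : Fin n → ℂ) (s : ℕ)
    (hS : (Finset.univ.filter fun j => μ j ≠ 0).card = n - s) (k : Fin n) :
    ((∏ j ∈ Finset.univ.erase k, ((1 : ℂ[X]) + X * C (μ j))).coeff (n - s))
      = if μ k = 0 then ∏ j ∈ Finset.univ.filter (fun j => μ j ≠ 0), μ j else 0 := by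
  classical
  set S := Finset.univ.filter (fun j : Fin n => μ j ≠ 0) with hSdef
  have hfilter : ∏ j ∈ Finset.univ.erase k, ((1 : ℂ[X]) + X * C (μ j))
      = ∏ j ∈ (Finset.univ.erase k).filter (fun j => μ j ≠ 0), ((1 : ℂ[X]) + X * C (μ j)) := by
    rw [eq_comm]
    refine Finset.prod_filter_of_ne fun x _ hx => ?_
    intro h0
    exact hx (by simp [h0])
  by_cases hk : μ k = 0
  · rw [if_pos hk, hfilter]
    have hset : (Finset.univ.erase k).filter (fun j => μ j ≠ 0) = S := by
      ext j
      simp only [Finset.mem_filter, Finset.mem_erase, Finset.mem_univ, true_and, hSdef, and_true]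
      constructor
      · exact fun h => h.2
      · intro h
        exact ⟨fun hj => h (hj ▸ hk), h⟩
    rw [hset, ← hS]
    have := Polynomial.coeff_prod_of_natDegree_le (s := S)
      (fun j => (1 : ℂ[X]) + X * C (μ j)) 1 (fun p _ => natDegree_g_le _)
    rw [mul_one] at this
    rw [this]
    exact Finset.prod_congr rfl fun j _ => coeff_g_one _
  · rw [if_neg hk, hfilter]
    have hset : (Finset.univ.erase k).filter (fun j => μ j ≠ 0) = S.erase k := by
      ext j
      simp only [Finset.mem_filter, Finset.mem_erase, Finset.mem_univ, true_and, hSdef, and_true]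
    have hkS : k ∈ S := by simp [hSdef, hk]
    have hcard : (S.erase k).card < n - s := by
      rw [← hS]
      exact Finset.card_erase_lt_of_mem hkS
    refine Polynomial.coeff_eq_zero_of_natDegree_lt ?_
    rw [hset]
    refine lt_of_le_of_lt ((Polynomial.natDegree_prod_le _ _).trans ?_) hcard
    have := Finset.sum_le_card_nsmul (S.erase k)
      (fun j => ((1 : ℂ[X]) + X * C (μ j)).natDegree) 1 (fun j _ => natDegree_g_le _)
    simpa using this


lemma count_eq_aux {n : ℕ} (d : Fin n → ℂ) (lam : ℂ) :
    Polynomial.rootMultiplicity lam (∏ i, (X - C (d i)))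
      = (Finset.univ.filter fun i => d i = lam).card := by
  classical
  rw [← Polynomial.count_roots]
  have h : (∏ i, (X - C (d i)))
      = ((Finset.univ.val.map d).map (fun a => X - C a)).prod := by
    rw [Multiset.map_map]
    rfl
  rw [h, Polynomial.roots_multiset_prod_X_sub_C, Multiset.count_map]
  rw [show (Finset.univ.filter fun i => d i = lam).card
      = Multiset.card (Finset.univ.val.filter (fun i : Fin n => d i = lam)) from rfl]
  congr 1
  exact Multiset.filter_congr (fun x _ => by simp [eq_comm])

/-- Let `H` be an `n×n` complex Hermitian matrix and `λ` an eigenvalue of `H` of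
algebraic multiplicity `s ≥ 1`, and let `D = redComp s (λ•1 - H)` be the reduced
order-one complement of order `s` of the characteristic matrix.  Then `D ≠ 0` and
`H * D = λ • D`; in particular every nonzero column of `D` is an eigenvector of `H`
associated with `λ`. -/
theorem redComp_charmatrix_eigenvector {n : ℕ} (H : Matrix (Fin n) (Fin n) ℂ)
    (hH : H.IsHermitian) (lam : ℂ) (s : ℕ) (hs : 1 ≤ s)
    (hmul : Polynomial.rootMultiplicity lam (Matrix.charpoly H) = s) :
    redComp s (lam • (1 : Matrix (Fin n) (Fin n) ℂ) - H) ≠ 0 ∧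
      H * redComp s (lam • (1 : Matrix (Fin n) (Fin n) ℂ) - H)
        = lam • redComp s (lam • (1 : Matrix (Fin n) (Fin n) ℂ) - H) ∧
      ∀ j : Fin n,
        (fun i => redComp s (lam • (1 : Matrix (Fin n) (Fin n) ℂ) - H) i j) ≠ 0 →
          Module.End.HasEigenvector (Matrix.mulVecLin H) lam
            (fun i => redComp s (lam • (1 : Matrix (Fin n) (Fin n) ℂ) - H) i j) := by
  classical
  set V : Matrix (Fin n) (Fin n) ℂ := (hH.eigenvectorUnitary : Matrix (Fin n) (Fin n) ℂ)
    with hVdef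
  set W : Matrix (Fin n) (Fin n) ℂ := star V with hWdef
  have h1 : V * W = 1 := Matrix.mem_unitaryGroup_iff.mp hH.eigenvectorUnitary.2
  have h2 : W * V = 1 := Matrix.mem_unitaryGroup_iff'.mp hH.eigenvectorUnitary.2
  set d : Fin n → ℂ := fun i => ((hH.eigenvalues i : ℝ) : ℂ) with hd
  have hspec : H = V * Matrix.diagonal d * W := by
    exact hH.spectral_theorem
  set μ : Fin n → ℂ := fun i => lam - d i with hμ
  have hAconj : lam • (1 : Matrix (Fin n) (Fin n) ℂ) - H = V * Matrix.diagonal μ * W := by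
    have hdm : Matrix.diagonal μ
        = lam • (1 : Matrix (Fin n) (Fin n) ℂ) - Matrix.diagonal d := by
      ext i j
      rcases eq_or_ne i j with rfl | h
      · simp [hμ]
      · simp [Matrix.diagonal_apply_ne _ h, Matrix.one_apply_ne h]
    rw [hdm, Matrix.mul_sub, Matrix.sub_mul, ← hspec]
    congr 1
    rw [Matrix.mul_smul, Matrix.mul_one, Matrix.smul_mul, h1]
  have hcp : H.charpoly = ∏ i, (X - C (d i)) := by
    rw [hspec]
    exact charpoly_conj_aux V W d h1
  have hT : (Finset.univ.filter fun i => d i = lam).card = s := by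
    rw [← hmul, hcp, count_eq_aux]
  have hkey := Finset.card_filter_add_card_filter_not
    (s := (Finset.univ : Finset (Fin n))) (p := fun i => d i = lam)
  rw [Finset.card_univ, Fintype.card_fin, hT] at hkey
  have hfe : (Finset.univ.filter fun j => μ j ≠ 0)
      = (Finset.univ.filter fun i => ¬ (d i = lam)) := by
    apply Finset.filter_congr
    intro x _
    simp only [hμ, ne_eq, sub_eq_zero]
    exact not_congr eq_comm
  have hScard : (Finset.univ.filter fun j => μ j ≠ 0).card = n - s := by
    rw [hfe]; omega
  set S := Finset.univ.filter (fun j => μ j ≠ 0) with hSdef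
  set c := ∏ j ∈ S, μ j with hc
  have hcne : c ≠ 0 :=
    Finset.prod_ne_zero_iff.mpr (fun j hj => (Finset.mem_filter.mp hj).2)
  set e : Fin n → ℂ := fun k => if μ k = 0 then c else 0 with he
  have hred : redComp s (lam • (1 : Matrix (Fin n) (Fin n) ℂ) - H)
      = V * Matrix.diagonal e * W := by
    have hfun : (fun k => ((∏ j ∈ Finset.univ.erase k,
        ((1 : ℂ[X]) + X * C (μ j))).coeff (n - s))) = e := by
      funext k
      rw [coeff_q μ s hScard k]
    rw [hAconj, redComp_conj V W h1 h2 s μ, hfun]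
  set D := redComp s (lam • (1 : Matrix (Fin n) (Fin n) ℂ) - H) with hD
  -- nonzero
  have hTne : ∃ k, μ k = 0 := by
    have hpos : 0 < (Finset.univ.filter fun i => d i = lam).card := by omega
    obtain ⟨k, hk⟩ := Finset.card_pos.mp hpos
    refine ⟨k, ?_⟩
    have := (Finset.mem_filter.mp hk).2
    simp [hμ, this]
  have hDne : D ≠ 0 := by
    rw [hred]
    intro h0
    obtain ⟨k, hk⟩ := hTne
    have hdiag : Matrix.diagonal e = W * (V * Matrix.diagonal e * W) * V := by
      have hjug : W * (V * Matrix.diagonal e * W) * V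
          = (W * V) * Matrix.diagonal e * (W * V) := by noncomm_ring
      rw [hjug, h2, Matrix.one_mul, Matrix.mul_one]
    rw [h0] at hdiag
    simp only [Matrix.mul_zero, Matrix.zero_mul] at hdiag
    have hek := congrArg (fun M : Matrix (Fin n) (Fin n) ℂ => M k k) hdiag
    simp only [Matrix.diagonal_apply_eq, Matrix.zero_apply] at hek
    rw [he] at hek
    simp only [hk, if_pos] at hek
    exact hcne hek
  -- H * D = lam • D
  have hde : Matrix.diagonal d * Matrix.diagonal e
      = Matrix.diagonal (fun k => lam * e k) := by
    rw [Matrix.diagonal_mul_diagonal]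
    have hfun2 : (fun k => d k * e k) = fun k => lam * e k := by
      funext k
      by_cases hk : μ k = 0
      · have hdk : d k = lam := (sub_eq_zero.mp hk).symm
        rw [hdk]
      · simp [he, hk]
    rw [hfun2]
  have hHD : H * D = lam • D := by
    rw [hred]
    have hmid : H * (V * Matrix.diagonal e * W)
        = V * (Matrix.diagonal d * Matrix.diagonal e) * W := by
      rw [hspec]
      calc (V * Matrix.diagonal d * W) * (V * Matrix.diagonal e * W)
          = V * Matrix.diagonal d * (W * V) * Matrix.diagonal e * W := by noncomm_ring
        _ = V * (Matrix.diagonal d * Matrix.diagonal e) * W := by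
            rw [h2]; noncomm_ring
    rw [hmid, hde, show (fun k => lam * e k) = lam • e from rfl,
      Matrix.diagonal_smul, Matrix.mul_smul, Matrix.smul_mul]
  refine ⟨hDne, hHD, ?_⟩
  intro j hj
  refine Module.End.hasEigenvector_iff.mpr ⟨Module.End.mem_eigenspace_iff.mpr ?_, hj⟩
  funext i
  have hent : (H * D) i j = lam * D i j := by
    rw [hHD]
    simp [Matrix.smul_apply]
  have hmv : (H.mulVec fun i' => D i' j) i = (H * D) i j := by
    rw [Matrix.mul_apply]
    rfl
  show (H.mulVec fun i' => D i' j) i = _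
  rw [hmv, hent]
  simp
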